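/- For any two probability measures μ and ν on a common measurable space, the Jensen–Shannon divergence satisfies D_JS(μ, ν) ≥ (1/2) · D_TV(μ, ν)²; equivalently, D_TV(μ, ν) ≤ √(2 · D_JS(μ, ν)). -/

import Mathlib

open MeasureTheory ProbabilityTheory
open scoped ENNReal

/-- The total variation distance `sup_A |μ(A) − ν(A)|` over measurable sets `A`. -/
noncomputable def tvDist {α : Type*} [MeasurableSpace α] (μ ν : Measure α) : ℝ :=
  ⨆ A : {s : Set α // MeasurableSet s}, |(μ ↑A).toReal - (ν ↑A).toReal|

/-- The Kullback–Leibler divergence `D_KL(μ, ν) = ∫ f(dμ/dν) dν` with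
`f(t) = t log t + 1 − t ≥ 0`, valued in `[0, ∞]`.  For probability measures with `μ ≪ ν`
this agrees with `∫ (dμ/dν) log(dμ/dν) dν`, since `∫ (1 − dμ/dν) dν = 0`. -/
noncomputable def klDiv {α : Type*} [MeasurableSpace α] (μ ν : Measure α) : ℝ≥0∞ :=
  ∫⁻ x, ENNReal.ofReal
    ((μ.rnDeriv ν x).toReal * Real.log (μ.rnDeriv ν x).toReal
      + 1 - (μ.rnDeriv ν x).toReal) ∂ν

/-- The Jensen–Shannon divergence
`D_JS(μ, ν) = (1/2) D_KL(μ, m) + (1/2) D_KL(ν, m)` with `m = (μ + ν)/2`. -/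
noncomputable def jsDiv {α : Type*} [MeasurableSpace α] (μ ν : Measure α) : ℝ≥0∞ :=
  2⁻¹ * klDiv μ ((2 : ENNReal)⁻¹ • (μ + ν)) + 2⁻¹ * klDiv ν ((2 : ENNReal)⁻¹ • (μ + ν))

section AuxStmt9
open Real in
lemma deriv_g {x : ℝ} (hx1 : -1 < x) (hx2 : x < 1) :
    HasDerivAt (fun u : ℝ => Real.log (1+u) - Real.log (1-u) - 2*u)
      ((1+x)⁻¹ + (1-x)⁻¹ - 2) x := by
  have h1 : (0:ℝ) < 1 + x := by linarith
  have h2 : (0:ℝ) < 1 - x := by linarith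
  have d1 : HasDerivAt (fun u : ℝ => Real.log (1+u)) ((1+x)⁻¹) x := by
    have : HasDerivAt (fun u : ℝ => 1+u) 1 x := by
      simpa using (hasDerivAt_id x).const_add 1
    exact ((Real.hasDerivAt_log h1.ne').comp x this).congr_deriv (by simp)
  have d2 : HasDerivAt (fun u : ℝ => Real.log (1-u)) (-(1-x)⁻¹) x := by
    have : HasDerivAt (fun u : ℝ => 1-u) (-1) x := by
      simpa using (hasDerivAt_id x).const_sub 1
    exact ((Real.hasDerivAt_log h2.ne').comp x this).congr_deriv (by simp)
  have d3 : HasDerivAt (fun u : ℝ => 2*u) 2 x := by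
    simpa using (hasDerivAt_id x).const_mul 2
  refine ((d1.sub d2).sub d3).congr_deriv ?_
  ring

lemma keyA {s : ℝ} (h0 : 0 ≤ s) (h1 : s < 1) :
    2*s ≤ Real.log (1+s) - Real.log (1-s) := by
  set g : ℝ → ℝ := fun u => Real.log (1+u) - Real.log (1-u) - 2*u with hg
  have hmono : MonotoneOn g (Set.Ico (0:ℝ) 1) := by
    apply monotoneOn_of_deriv_nonneg (convex_Ico 0 1)
    · apply ContinuousOn.sub (ContinuousOn.sub ?_ ?_) (by fun_prop)
      · apply Real.continuousOn_log.comp (by fun_prop)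
        intro x hx
        simp only [Set.mem_Ico] at hx
        simp only [Set.mem_compl_iff, Set.mem_singleton_iff]
        intro h; linarith [hx.1, hx.2]
      · apply Real.continuousOn_log.comp (by fun_prop)
        intro x hx
        simp only [Set.mem_Ico] at hx
        simp only [Set.mem_compl_iff, Set.mem_singleton_iff]
        intro h; linarith [hx.1, hx.2]
    · intro x hx
      rw [interior_Ico] at hx
      exact (deriv_g (by linarith [hx.1]) hx.2).differentiableAt.differentiableWithinAt
    · intro x hx
      rw [interior_Ico] at hx
      rw [(deriv_g (by linarith [hx.1]) hx.2).deriv]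
      have h1 : (0:ℝ) < 1 + x := by linarith [hx.1]
      have h2 : (0:ℝ) < 1 - x := by linarith [hx.2]
      have e : (1+x)⁻¹ + (1-x)⁻¹ = 2/((1+x)*(1-x)) := by field_simp; ring
      rw [e]
      have hp : (0:ℝ) < (1+x)*(1-x) := mul_pos h1 h2
      have hle : (1+x)*(1-x) ≤ 1 := by nlinarith [sq_nonneg x]
      have : (2:ℝ) ≤ 2/((1+x)*(1-x)) := by
        rw [le_div_iff₀ hp]; nlinarith
      linarith
  have := hmono (Set.mem_Ico.2 ⟨le_refl 0, one_pos⟩) (Set.mem_Ico.2 ⟨h0, h1⟩) h0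
  simp [hg] at this
  linarith

lemma deriv_F {x : ℝ} (hx1 : -1 < x) (hx2 : x < 1) :
    HasDerivAt (fun u : ℝ => (1+u)*Real.log (1+u) + (1-u)*Real.log (1-u) - u^2)
      (Real.log (1+x) - Real.log (1-x) - 2*x) x := by
  have h1 : (0:ℝ) < 1 + x := by linarith
  have h2 : (0:ℝ) < 1 - x := by linarith
  have e1 : HasDerivAt (fun u : ℝ => 1+u) 1 x := by simpa using (hasDerivAt_id x).const_add 1
  have e2 : HasDerivAt (fun u : ℝ => 1-u) (-1) x := by simpa using (hasDerivAt_id x).const_sub 1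
  have d1 : HasDerivAt (fun u : ℝ => Real.log (1+u)) ((1+x)⁻¹) x := by
    exact ((Real.hasDerivAt_log h1.ne').comp x e1).congr_deriv (by simp)
  have d2 : HasDerivAt (fun u : ℝ => Real.log (1-u)) (-(1-x)⁻¹) x := by
    exact ((Real.hasDerivAt_log h2.ne').comp x e2).congr_deriv (by simp)
  have m1 := e1.mul d1
  have m2 := e2.mul d2
  have sq : HasDerivAt (fun u : ℝ => u^2) (2*x) x := by
    simpa using (hasDerivAt_pow 2 x)
  refine ((m1.add m2).sub sq).congr_deriv ?_
  field_simp
  ring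

lemma keyPos {s : ℝ} (h0 : 0 ≤ s) (h1 : s ≤ 1) :
    s^2 ≤ (1+s)*Real.log (1+s) + (1-s)*Real.log (1-s) := by
  rcases eq_or_lt_of_le h1 with rfl | h1
  · have := Real.log_two_gt_d9
    norm_num
    nlinarith
  set F : ℝ → ℝ := fun u => (1+u)*Real.log (1+u) + (1-u)*Real.log (1-u) - u^2 with hF
  have hmono : MonotoneOn F (Set.Ico (0:ℝ) 1) := by
    apply monotoneOn_of_deriv_nonneg (convex_Ico 0 1)
    · apply ContinuousOn.sub (ContinuousOn.add ?_ ?_) (by fun_prop)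
      · apply ContinuousOn.mul (by fun_prop)
        apply Real.continuousOn_log.comp (by fun_prop)
        intro x hx
        simp only [Set.mem_Ico] at hx
        simp only [Set.mem_compl_iff, Set.mem_singleton_iff]
        intro h; linarith [hx.1, hx.2]
      · apply ContinuousOn.mul (by fun_prop)
        apply Real.continuousOn_log.comp (by fun_prop)
        intro x hx
        simp only [Set.mem_Ico] at hx
        simp only [Set.mem_compl_iff, Set.mem_singleton_iff]
        intro h; linarith [hx.1, hx.2]
    · intro x hx
      rw [interior_Ico] at hx
      exact (deriv_F (by linarith [hx.1]) hx.2).differentiableAt.differentiableWithinAt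
    · intro x hx
      rw [interior_Ico] at hx
      rw [(deriv_F (by linarith [hx.1]) hx.2).deriv]
      linarith [keyA (le_of_lt hx.1) hx.2]
  have := hmono (Set.mem_Ico.2 ⟨le_refl 0, one_pos⟩) (Set.mem_Ico.2 ⟨h0, h1⟩) h0
  simp [hF] at this
  linarith

lemma key {s : ℝ} (hm : -1 ≤ s) (h1 : s ≤ 1) :
    s^2 ≤ (1+s)*Real.log (1+s) + (1-s)*Real.log (1-s) := by
  rcases le_total 0 s with h | h
  · exact keyPos h h1
  · have := keyPos (s := -s) (by linarith) (by linarith)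
    have e1 : 1 + -s = 1 - s := by ring
    have e2 : 1 - -s = 1 + s := by ring
    rw [e1, e2] at this
    nlinarith [this]

lemma phi_nonneg {t : ℝ} (ht : 0 ≤ t) : 0 ≤ t * Real.log t + 1 - t := by
  rcases eq_or_lt_of_le ht with rfl | ht
  · simp
  · have h := Real.one_sub_inv_le_log_of_pos ht
    have := mul_le_mul_of_nonneg_left h ht.le
    have e : t * (1 - t⁻¹) = t - 1 := by field_simp
    rw [e] at this
    linarith

end AuxStmt9

/-- for any two probability measures,
`D_JS(μ,ν) ≥ (1/2) D_TV(μ,ν)²`; equivalently, `D_TV(μ,ν) ≤ √(2 D_JS(μ,ν))`. -/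
theorem stmt9 {α : Type*} [MeasurableSpace α] (μ ν : Measure α)
    [IsProbabilityMeasure μ] [IsProbabilityMeasure ν] :
    ENNReal.ofReal (2⁻¹ * tvDist μ ν ^ 2) ≤ jsDiv μ ν ∧
    ENNReal.ofReal (tvDist μ ν) ≤ (2 * jsDiv μ ν) ^ ((2 : ℝ)⁻¹) := by
  set m : Measure α := (2 : ENNReal)⁻¹ • (μ + ν) with hm
  have hm2 : (2 : ℝ≥0∞) • m = μ + ν := by
    rw [hm, smul_smul, ENNReal.mul_inv_cancel (by norm_num) (by norm_num), one_smul]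
  haveI : IsProbabilityMeasure m := by
    constructor
    rw [hm]
    simp [Measure.smul_apply, Measure.add_apply]
    rw [← two_mul, ENNReal.mul_inv_cancel (by norm_num) (by norm_num)]
  have hμm : μ ≪ m := by
    intro A hA
    have : (μ + ν) A = 0 := by
      rw [← hm2]; simp [Measure.smul_apply, hA]
    simp [Measure.add_apply] at this
    exact this.1
  have hνm : ν ≪ m := by
    intro A hA
    have : (μ + ν) A = 0 := by
      rw [← hm2]; simp [Measure.smul_apply, hA]
    simp [Measure.add_apply] at this
    exact this.2
  set f := μ.rnDeriv m with hf
  set g := ν.rnDeriv m with hg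
  -- a.e. facts
  have hfg : f + g =ᵐ[m] fun _ => 2 := by
    have h1 : (μ + ν).rnDeriv m =ᵐ[m] f + g := Measure.rnDeriv_add μ ν m
    have h3 : ((2 : ℝ≥0∞) • m).rnDeriv m =ᵐ[m] (2 : ℝ≥0∞) • m.rnDeriv m :=
      Measure.rnDeriv_smul_left_of_ne_top m m (by norm_num)
    have h4 := Measure.rnDeriv_self m
    rw [hm2] at h3
    filter_upwards [h1, h3, h4] with x e1 e3 e4
    rw [← e1, e3]
    simp [e4]
  have hflt := Measure.rnDeriv_lt_top μ m
  have hglt := Measure.rnDeriv_lt_top ν m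
  -- real versions
  set F : α → ℝ := fun x => (f x).toReal with hF
  set G : α → ℝ := fun x => (g x).toReal with hG
  have hFmeas : Measurable F := (Measure.measurable_rnDeriv μ m).ennreal_toReal
  have hGmeas : Measurable G := (Measure.measurable_rnDeriv ν m).ennreal_toReal
  have hptwise : ∀ᵐ x ∂m, F x + G x = 2 ∧ 0 ≤ F x ∧ F x ≤ 2 ∧ G x = 2 - F x := by
    filter_upwards [hfg, hflt, hglt] with x e1 e2 e3
    have e1' : f x + g x = 2 := e1
    have hsum : F x + G x = 2 := by
      rw [hF, hG]
      simp only
      rw [← ENNReal.toReal_add e2.ne e3.ne, e1']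
      norm_num
    have hF0 : 0 ≤ F x := ENNReal.toReal_nonneg
    have hG0 : 0 ≤ G x := ENNReal.toReal_nonneg
    exact ⟨hsum, hF0, by linarith, by linarith⟩
  have intF : Integrable F m := Measure.integrable_toReal_rnDeriv
  have intG : Integrable G m := Measure.integrable_toReal_rnDeriv
  have intS : Integrable (fun x => |F x - 1|) m := (intF.sub (integrable_const 1)).abs
  set T : ℝ := ∫ x, |F x - 1| ∂m with hT
  have hT0 : 0 ≤ T := integral_nonneg fun x => abs_nonneg _
  -- TV bound
  have tv_bound : ∀ A : {s : Set α // MeasurableSet s},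
      |(μ (A : Set α)).toReal - (ν (A : Set α)).toReal| ≤ T := by
    rintro ⟨A, hA⟩
    have eμ : (μ A).toReal = ∫ x in A, F x ∂m :=
      (Measure.setIntegral_toReal_rnDeriv hμm A).symm
    have eν : (ν A).toReal = ∫ x in A, G x ∂m :=
      (Measure.setIntegral_toReal_rnDeriv hνm A).symm
    have hI : (μ A).toReal - (ν A).toReal = ∫ x in A, (F x - G x) ∂m := by
      rw [eμ, eν, integral_sub (intF.integrableOn) (intG.integrableOn)]
    have htot : ∫ x, (F x - G x) ∂m = 0 := by
      rw [integral_sub intF intG, Measure.integral_toReal_rnDeriv hμm,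
        Measure.integral_toReal_rnDeriv hνm]
      simp
    have hsplit : (∫ x in A, (F x - G x) ∂m) + (∫ x in Aᶜ, (F x - G x) ∂m)
        = ∫ x, (F x - G x) ∂m := integral_add_compl hA (intF.sub intG)
    have habs : ∀ (B : Set α), |∫ x in B, (F x - G x) ∂m| ≤ ∫ x in B, |F x - G x| ∂m := by
      intro B
      simpa [Real.norm_eq_abs] using
        norm_integral_le_integral_norm (μ := m.restrict B) (fun x => F x - G x)
    have hFGabs : ∀ᵐ x ∂m, |F x - G x| = 2 * |F x - 1| := by
      filter_upwards [hptwise] with x hx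
      rw [hx.2.2.2]
      rw [show F x - (2 - F x) = 2 * (F x - 1) by ring, abs_mul]
      simp
    have intFGa : Integrable (fun x => |F x - G x|) m := by
      exact (intF.sub intG).abs
    have hsum : (∫ x in A, |F x - G x| ∂m) + (∫ x in Aᶜ, |F x - G x| ∂m) = 2 * T := by
      rw [integral_add_compl hA intFGa]
      rw [integral_congr_ae hFGabs, integral_const_mul]
    have h1 := habs A
    have h2 := habs Aᶜ
    have hIJ : ∫ x in Aᶜ, (F x - G x) ∂m = -∫ x in A, (F x - G x) ∂m := by
      rw [htot] at hsplit; linarith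
    rw [hIJ, abs_neg] at h2
    rw [hI]
    linarith
  have hbdd : BddAbove (Set.range fun A : {s : Set α // MeasurableSet s} =>
      |(μ (A : Set α)).toReal - (ν (A : Set α)).toReal|) := ⟨T, by rintro _ ⟨A, rfl⟩; exact tv_bound A⟩
  have tv_le : tvDist μ ν ≤ T := ciSup_le tv_bound
  have tv_nonneg : 0 ≤ tvDist μ ν := by
    have := le_ciSup hbdd (⟨∅, MeasurableSet.empty⟩ : {s : Set α // MeasurableSet s})
    simpa [tvDist] using this.trans_eq' (by simp)
  -- Cauchy-Schwarz
  set S : ℝ≥0∞ := ∫⁻ x, ENNReal.ofReal ((F x - 1)^2) ∂m with hS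
  have hCS : ENNReal.ofReal (T^2) ≤ S := by
    have hmeas : AEMeasurable (fun x => ENNReal.ofReal (|F x - 1|)) m :=
      ((hFmeas.sub measurable_const).abs.ennreal_ofReal).aemeasurable
    have hT' : ENNReal.ofReal T = ∫⁻ x, ENNReal.ofReal (|F x - 1|) ∂m :=
      ofReal_integral_eq_lintegral_ofReal intS (Filter.Eventually.of_forall fun x => abs_nonneg _)
    have hconj : (2 : ℝ).HolderConjugate 2 :=
      Real.HolderConjugate.two_two
    have hH := ENNReal.lintegral_mul_le_Lp_mul_Lq m hconj hmeas
      (aemeasurable_const : AEMeasurable (fun _ => (1:ℝ≥0∞)) m)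
    simp only [Pi.mul_apply, mul_one, ENNReal.one_rpow, lintegral_const, measure_univ,
      one_mul] at hH
    have hpow : ∀ x, ENNReal.ofReal (|F x - 1|) ^ (2:ℝ) = ENNReal.ofReal ((F x - 1)^2) := by
      intro x
      rw [ENNReal.ofReal_rpow_of_nonneg (abs_nonneg _) (by norm_num : (0:ℝ) ≤ 2)]
      congr 1
      rw [show ((2:ℝ)) = ((2:ℕ):ℝ) by norm_num, Real.rpow_natCast, sq_abs]
    simp only [hpow] at hH
    -- hH : ∫⁻ ofReal|F-1| ≤ S ^ (1/2)
    calc ENNReal.ofReal (T^2) = (ENNReal.ofReal T) ^ (2:ℝ) := by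
          rw [ENNReal.ofReal_rpow_of_nonneg hT0 (by norm_num : (0:ℝ) ≤ 2)]
          congr 1
          rw [show ((2:ℝ)) = ((2:ℕ):ℝ) by norm_num, Real.rpow_natCast]
      _ ≤ ((∫⁻ x, ENNReal.ofReal ((F x - 1)^2) ∂m) ^ ((1:ℝ)/2)) ^ (2:ℝ) := by
          apply ENNReal.rpow_le_rpow _ (by norm_num)
          rw [hT']; exact hH
      _ = S := by
          rw [← ENNReal.rpow_mul]
          norm_num
          rfl
  -- JS lower bound
  have hJS : 2⁻¹ * S ≤ jsDiv μ ν := by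
    have hklμ : klDiv μ m = ∫⁻ x, ENNReal.ofReal (F x * Real.log (F x) + 1 - F x) ∂m := rfl
    have hklν : klDiv ν m = ∫⁻ x, ENNReal.ofReal (G x * Real.log (G x) + 1 - G x) ∂m := rfl
    have hmeasφF : Measurable (fun x => ENNReal.ofReal (F x * Real.log (F x) + 1 - F x)) :=
      (((hFmeas.mul (Real.measurable_log.comp hFmeas)).add_const 1).sub hFmeas).ennreal_ofReal
    have hmeasφG : Measurable (fun x => ENNReal.ofReal (G x * Real.log (G x) + 1 - G x)) :=
      (((hGmeas.mul (Real.measurable_log.comp hGmeas)).add_const 1).sub hGmeas).ennreal_ofReal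
    have hsum : klDiv μ m + klDiv ν m =
        ∫⁻ x, (ENNReal.ofReal (F x * Real.log (F x) + 1 - F x)
          + ENNReal.ofReal (G x * Real.log (G x) + 1 - G x)) ∂m := by
      rw [hklμ, hklν, lintegral_add_left hmeasφF]
    have hmono : S ≤ klDiv μ m + klDiv ν m := by
      rw [hsum]
      apply lintegral_mono_ae
      filter_upwards [hptwise] with x hx
      obtain ⟨hsum2, hF0, hF2, hGe⟩ := hx
      set s := F x - 1 with hs
      have hs1 : -1 ≤ s := by simp [hs]; linarith
      have hs2 : s ≤ 1 := by simp [hs]; linarith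
      have hφF : 0 ≤ F x * Real.log (F x) + 1 - F x := phi_nonneg hF0
      have hφG : 0 ≤ G x * Real.log (G x) + 1 - G x := phi_nonneg (by rw [hGe]; linarith)
      rw [← ENNReal.ofReal_add hφF hφG]
      apply ENNReal.ofReal_le_ofReal
      have hkey := key hs1 hs2
      have eF : F x = 1 + s := by simp [hs]
      have eG : G x = 1 - s := by rw [hGe]; simp [hs]; ring
      rw [eF, eG]
      nlinarith [hkey]
    have : jsDiv μ ν = 2⁻¹ * (klDiv μ m + klDiv ν m) := by
      rw [jsDiv, mul_add, hm]
    rw [this]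
    exact mul_le_mul_right hmono _
  -- conclude
  have hhalf : ENNReal.ofReal (2⁻¹ * tvDist μ ν ^ 2)
      = 2⁻¹ * ENNReal.ofReal (tvDist μ ν ^ 2) := by
    rw [ENNReal.ofReal_mul (by norm_num)]
    congr 1
    simp [ENNReal.ofReal_inv_of_pos]
  have main : ENNReal.ofReal (2⁻¹ * tvDist μ ν ^ 2) ≤ jsDiv μ ν := by
    calc ENNReal.ofReal (2⁻¹ * tvDist μ ν ^ 2)
        = 2⁻¹ * ENNReal.ofReal (tvDist μ ν ^ 2) := hhalf
      _ ≤ 2⁻¹ * ENNReal.ofReal (T ^ 2) := by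
          apply mul_le_mul_right
          exact ENNReal.ofReal_le_ofReal (by nlinarith)
      _ ≤ 2⁻¹ * S := mul_le_mul_right hCS _
      _ ≤ jsDiv μ ν := hJS
  refine ⟨main, ?_⟩
  have h2 : ENNReal.ofReal (tvDist μ ν ^ 2) ≤ 2 * jsDiv μ ν := by
    have := mul_le_mul_right main 2
    calc ENNReal.ofReal (tvDist μ ν ^ 2)
        = 2 * ENNReal.ofReal (2⁻¹ * tvDist μ ν ^ 2) := by
          rw [hhalf, ← mul_assoc,
            ENNReal.mul_inv_cancel (by norm_num) (by norm_num), one_mul]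
      _ ≤ 2 * jsDiv μ ν := this
  calc ENNReal.ofReal (tvDist μ ν)
      = (ENNReal.ofReal (tvDist μ ν ^ 2)) ^ ((2:ℝ)⁻¹) := by
        rw [ENNReal.ofReal_pow tv_nonneg]
        rw [← ENNReal.rpow_natCast (ENNReal.ofReal (tvDist μ ν)) 2, ← ENNReal.rpow_mul]
        norm_num
    _ ≤ (2 * jsDiv μ ν) ^ ((2:ℝ)⁻¹) := ENNReal.rpow_le_rpow h2 (by norm_num)
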